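/- For every integer x ≥ 1, Σ_{j=0}^{x−1} ((2j−1)!! · x! · (2x−1)!! · (2x−1)! · (4j−2x+3)) / ((4x−3)!! · (j+1)! · (x−j−1)! · (2x−2j−1)!! · (2j)!) = 1, as an identity in ℚ (note that the integer factor 4j−2x+3 may be negative). -/

import Mathlib

/-- Double factorial `n‼`; with natural subtraction as argument this also
implements the convention `(-1)‼ = 0‼ = 1`. -/
def dfact : ℕ → ℕ
  | 0 => 1
  | 1 => 1
  | n + 2 => (n + 2) * dfact n

theorem dfact_pos : ∀ n, 0 < dfact n
  | 0 => Nat.one_pos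
  | 1 => Nat.one_pos
  | (n+2) => Nat.mul_pos (by omega) (dfact_pos n)

theorem dfact_cast_ne (n : ℕ) : (dfact n : ℚ) ≠ 0 := by
  exact_mod_cast (dfact_pos n).ne'

theorem fact_cast_ne (n : ℕ) : ((n.factorial : ℕ) : ℚ) ≠ 0 := by
  exact_mod_cast n.factorial_pos.ne'

theorem dfact_step (n : ℕ) : (dfact (n+2) : ℚ) = (n+2) * dfact n := by
  push_cast [show dfact (n+2) = (n+2) * dfact n from rfl]; ring

theorem dfact_odd (j : ℕ) : (dfact (2*j+1) : ℚ) = (2*(j:ℚ)+1) * dfact (2*j-1) := by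
  cases j with
  | zero => norm_num; rfl
  | succ n =>
    rw [show 2*(n+1)+1 = (2*n+1)+2 by ring, show 2*(n+1)-1 = 2*n+1 by omega, dfact_step]
    push_cast; ring

open Nat in
def Fterm (x j : ℕ) : ℚ :=
  ((dfact (2 * j - 1) : ℚ) * (x ! : ℚ) * (dfact (2 * x - 1) : ℚ) *
      ((2 * x - 1) ! : ℚ) * (4 * (j : ℚ) - 2 * (x : ℚ) + 3)) /
    ((dfact (4 * x - 3) : ℚ) * ((j + 1) ! : ℚ) * ((x - j - 1) ! : ℚ) *
      (dfact (2 * x - 2 * j - 1) : ℚ) * ((2 * j) ! : ℚ))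

open Nat in
def Gc (x j : ℕ) : ℚ :=
  (-2 * (j:ℚ) * ((j:ℚ)+1) *
      (1 + 2*(j:ℚ) - 8*(j:ℚ)^2 + 4*(x:ℚ) + 28*(x:ℚ)*(j:ℚ) - 32*(x:ℚ)*(j:ℚ)^2
        + 64*(x:ℚ)^2*(j:ℚ) - 8*(x:ℚ)^2 - 24*(x:ℚ)^3)
    * (dfact (2*j-1) : ℚ) * (x ! : ℚ) * (dfact (2*x-1) : ℚ) * ((2*x-1)! : ℚ))
  / ((16*(x:ℚ)^2 - 1) * (dfact (4*x-3) : ℚ) * ((j+1)! : ℚ) * ((x-j)! : ℚ) *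
      (dfact (2*x-2*j+1) : ℚ) * ((2*j)! : ℚ))

open Nat in
set_option maxHeartbeats 2000000 in
theorem lemA (j m : ℕ) :
    Fterm (j+m+2) j = Fterm (j+m+1) j + (Gc (j+m+1) (j+1) - Gc (j+m+1) j) := by
  unfold Fterm Gc
  simp only [show 2*(j+m+2)-1 = 2*j+2*m+3 by omega,
    show 2*(j+m+1)-1 = 2*j+2*m+1 by omega,
    show 4*(j+m+2)-3 = 4*j+4*m+5 by omega,
    show 4*(j+m+1)-3 = 4*j+4*m+1 by omega,
    show (j+m+2)-j-1 = m+1 by omega,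
    show (j+m+1)-j-1 = m by omega,
    show (j+m+1)-j = m+1 by omega,
    show (j+m+1)-(j+1) = m by omega,
    show 2*(j+m+2)-2*j-1 = 2*m+3 by omega,
    show 2*(j+m+1)-2*j-1 = 2*m+1 by omega,
    show 2*(j+m+1)-2*j+1 = 2*m+3 by omega,
    show 2*(j+m+1)-2*(j+1)+1 = 2*m+1 by omega,
    show 2*(j+1)-1 = 2*j+1 by omega]
  rw [show (2*j+2*m+3) = (2*j+2*m+1)+2 by ring, dfact_step,
      show (4*j+4*m+5) = ((4*j+4*m+1)+2)+2 by ring, dfact_step, dfact_step,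
      show (2*m+3) = (2*m+1)+2 by ring, dfact_step, dfact_odd j,
      show (j+m+2)! = (j+m+2)*(j+m+1)! by rw [show j+m+2 = (j+m+1)+1 from rfl, Nat.factorial_succ],
      show ((2*j+2*m+1)+2)! = ((2*j+2*m+1)+2)*((2*j+2*m+1)+1)*(2*j+2*m+1)! by
        rw [Nat.factorial_succ, Nat.factorial_succ]; ring,
      show (m+1)! = (m+1)*(m)! from Nat.factorial_succ m,
      show (j+1+1)! = (j+2)*(j+1)! from Nat.factorial_succ (j+1),
      show (2*(j+1))! = (2*j+2)*((2*j+1)*(2*j)!) by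
        rw [show 2*(j+1) = (2*j+1)+1 by ring, Nat.factorial_succ, Nat.factorial_succ]]
  push_cast
  have h1 := dfact_cast_ne (2*j-1)
  have h2 := dfact_cast_ne (2*j+2*m+1)
  have h3 := dfact_cast_ne (4*j+4*m+1)
  have h4 := dfact_cast_ne (2*m+1)
  have h5 := fact_cast_ne (j+m+1)
  have h6 := fact_cast_ne (2*j+2*m+1)
  have h7 := fact_cast_ne (j+1)
  have h8 := fact_cast_ne m
  have h9 := fact_cast_ne (2*j)
  have hj : (0:ℚ) ≤ (j:ℚ) := Nat.cast_nonneg j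
  have hm : (0:ℚ) ≤ (m:ℚ) := Nat.cast_nonneg m
  have h10 : (16*((j:ℚ)+m+1)^2 - 1) ≠ 0 := by nlinarith [sq_nonneg ((j:ℚ)+m)]
  have h10' : (((j:ℚ)+m+1)^2*16 - 1) ≠ 0 := by nlinarith [sq_nonneg ((j:ℚ)+m)]
  field_simp
  ring

open Nat in
set_option maxHeartbeats 2000000 in
theorem lemB (n : ℕ) : Fterm (n+2) (n+1) + Gc (n+1) (n+1) = 0 := by
  unfold Fterm Gc
  simp only [show 2*(n+1)-1 = 2*n+1 by omega,
    show 2*(n+2)-1 = 2*n+3 by omega,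
    show 4*(n+2)-3 = 4*n+5 by omega,
    show 4*(n+1)-3 = 4*n+1 by omega,
    show (n+2)-(n+1)-1 = 0 by omega,
    show (n+1)-(n+1) = 0 by omega,
    show 2*(n+2)-2*(n+1)-1 = 1 by omega,
    show 2*(n+1)-2*(n+1)+1 = 1 by omega]
  rw [show (2*n+3) = (2*n+1)+2 by ring, dfact_step,
      show (4*n+5) = ((4*n+1)+2)+2 by ring, dfact_step, dfact_step,
      show (n+2)! = (n+2)*(n+1)! by rw [show n+2 = (n+1)+1 from rfl, Nat.factorial_succ],
      show ((2*n+1)+2)! = ((2*n+1)+2)*((2*n+1)+1)*(2*n+1)! by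
        rw [Nat.factorial_succ, Nat.factorial_succ]; ring,
      show (2*(n+1))! = (2*n+2)*((2*n+1)*(2*n)!) by
        rw [show 2*(n+1) = (2*n+1)+1 by ring, Nat.factorial_succ, Nat.factorial_succ]]
  push_cast
  have h1 := dfact_cast_ne (2*(n+1)-1)
  have h2 := dfact_cast_ne (2*n+1)
  have h3 := dfact_cast_ne (4*n+1)
  have h4 := dfact_cast_ne 1
  have h5 := fact_cast_ne (n+1)
  have h6 := fact_cast_ne (2*n+1)
  have h7 := fact_cast_ne (2*n)
  have h8 := fact_cast_ne 0
  have hn : (0:ℚ) ≤ (n:ℚ) := Nat.cast_nonneg n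
  have h10 : (16*((n:ℚ)+1)^2 - 1) ≠ 0 := by nlinarith
  have h11 : dfact (2*(n+1)-1) = dfact (2*n+1) := by norm_num [show 2*(n+1)-1 = 2*n+1 by omega]
  rw [h11] at *
  have h10' : (((n:ℚ)+1)^2*16 - 1) ≠ 0 := by nlinarith
  field_simp
  ring

theorem Gc_zero (x : ℕ) : Gc x 0 = 0 := by
  simp [Gc]

open Nat in
theorem stmt_6 (x : ℕ) (hx : 1 ≤ x) :
    ∑ j ∈ Finset.range x,
      ((dfact (2 * j - 1) : ℚ) * (x ! : ℚ) * (dfact (2 * x - 1) : ℚ) *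
          ((2 * x - 1) ! : ℚ) * (4 * (j : ℚ) - 2 * (x : ℚ) + 3)) /
        ((dfact (4 * x - 3) : ℚ) * ((j + 1) ! : ℚ) * ((x - j - 1) ! : ℚ) *
          (dfact (2 * x - 2 * j - 1) : ℚ) * ((2 * j) ! : ℚ)) = 1 := by
  show ∑ j ∈ Finset.range x, Fterm x j = 1
  induction x, hx using Nat.le_induction with
  | base =>
    norm_num [Fterm, dfact, Nat.factorial]
  | succ x hx ih =>
    rw [Finset.sum_range_succ]
    have hstep : ∀ j ∈ Finset.range x, Fterm (x+1) j = Fterm x j + (Gc x (j+1) - Gc x j) := by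
      intro j hj
      rw [Finset.mem_range] at hj
      obtain ⟨m, rfl⟩ : ∃ m, x = j + m + 1 := ⟨x - j - 1, by omega⟩
      exact lemA j m
    rw [Finset.sum_congr rfl hstep, Finset.sum_add_distrib, ih,
        Finset.sum_range_sub (fun j => Gc x j), Gc_zero]
    obtain ⟨n, rfl⟩ : ∃ n, x = n + 1 := ⟨x - 1, by omega⟩
    have := lemB n
    linarith
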